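/- Let A be a matroid on K(V) in which all vertex stars minus m−1 edges are cocircuits and which satisfies axiom (C2) for dimension m. If k ≥ m, then every k-valent-0-extension of a rigid edge set is rigid. -/

import Mathlib

open Matroid Set

/-- A circuit of a matroid: a minimal dependent set. -/
def Matroid.IsCircuit' {α : Type*} (M : Matroid α) (C : Set α) : Prop :=
  M.Dep C ∧ ∀ D, D ⊂ C → M.Indep D

/-- A cocircuit: a circuit of the dual matroid. -/
def Matroid.IsCocircuit' {α : Type*} (M : Matroid α) (C : Set α) : Prop :=
  M✶.IsCircuit' C

/-- A hyperplane: a maximal subset of the ground set not containing a basis. -/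
def Matroid.IsHyperplane {α : Type*} (M : Matroid α) (H : Set α) : Prop :=
  H ⊆ M.E ∧ (¬ ∃ B ⊆ H, M.IsBase B) ∧
    ∀ H', H ⊂ H' → H' ⊆ M.E → ∃ B ⊆ H', M.IsBase B

/-- The rank of a set: the size of a largest independent subset. -/
noncomputable def Matroid.rk {α : Type*} (M : Matroid α) (X : Set α) : ℕ :=
  sSup {n | ∃ I ⊆ X, M.Indep I ∧ I.ncard = n}

/-- `cK U` is the edge set of the complete graph on the vertex set `U`. -/
def cK {V : Type*} (U : Set V) : Set (Sym2 V) :=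
  {e | ¬ e.IsDiag ∧ ∀ v ∈ e, v ∈ U}

/-- The support (set of endpoints) of an edge set. -/
def supp {V : Type*} (E : Set (Sym2 V)) : Set V := {v | ∃ e ∈ E, v ∈ e}

/-- An edge set is rigid if its closure is the complete graph on its support. -/
def Rigid {V : Type*} (A : Matroid (Sym2 V)) (E : Set (Sym2 V)) : Prop :=
  A.closure E = cK (supp E)

/-- `A` is an `m`-dimensional abstract rigidity matroid on `K(W)`. -/
def IsARMOn {V : Type*} (m : ℕ) (W : Set V) (A : Matroid (Sym2 V)) : Prop :=
  A.E = cK W ∧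
  (∀ E F : Set (Sym2 V), E ⊆ cK W → F ⊆ cK W →
    (supp E ∩ supp F).ncard < m →
    A.closure (E ∪ F) ⊆ cK (supp E) ∪ cK (supp F)) ∧
  (∀ E F : Set (Sym2 V), E ⊆ cK W → F ⊆ cK W →
    Rigid A E → Rigid A F → m ≤ (supp E ∩ supp F).ncard →
    Rigid A (E ∪ F))

/-- The star of a vertex: all edges containing it. -/
def starv {V : Type*} (v : V) : Set (Sym2 V) := {e | ¬ e.IsDiag ∧ v ∈ e}

/-- `C` is a vertex star minus `m-1` edges. -/
def IsStarMinus {V : Type*} (m : ℕ) (C : Set (Sym2 V)) : Prop :=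
  ∃ v : V, ∃ D ⊆ starv v, D.ncard = m - 1 ∧ C = starv v \ D

/-- The valence (degree) of a vertex in an edge set. -/
noncomputable def valence {V : Type*} (C : Set (Sym2 V)) (v : V) : ℕ :=
  {e ∈ C | v ∈ e}.ncard

/-- `bigstar V' = K(V) \ K(V \ V')`. -/
def bigstar {V : Type*} (V' : Set V) : Set (Sym2 V) :=
  cK (univ : Set V) \ cK (V'ᶜ)

/-- The family `H_m(V)` of unions of two complete graphs covering `V` and
meeting in `m-1` vertices. -/
def HmFam (m : ℕ) (V : Type*) : Set (Set (Sym2 V)) :=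
  {H | ∃ V₁ V₂ : Set V, V₁ ∪ V₂ = univ ∧ (V₁ ∩ V₂).ncard = m - 1 ∧
    ¬ V₁ ⊆ V₂ ∧ ¬ V₂ ⊆ V₁ ∧ H = cK V₁ ∪ cK V₂}

/-- The family `H_m^{(1)}(K(X))` of sets `Δ_v^A` relative to a vertex set `X`. -/
def Hm1Fam {V : Type*} (m : ℕ) (X : Set V) : Set (Set (Sym2 V)) :=
  {H | ∃ v ∈ X, ∃ A ⊆ X \ {v}, A.ncard = m - 1 ∧
    H = cK ({v} ∪ A) ∪ cK (X \ {v})}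

/-- If `e` lies in a cocircuit disjoint from `X`, then `e` is not in the closure of `X`. -/
lemma factA {α : Type*} {M : Matroid α} {C X : Set α} {e : α}
    (hC : M.IsCocircuit' C) (heC : e ∈ C) (hdisj : ∀ f ∈ C, f ∉ X) :
    e ∉ M.closure X := by
  obtain ⟨hdep, hmin⟩ := hC
  intro he
  have hCE : C ⊆ M.E := hdep.subset_ground
  have hind : M✶.Indep (C \ {e}) := hmin _ (Set.sdiff_singleton_ssubset.2 heC)
  obtain ⟨-, B, hB, hBdisj⟩ := Matroid.dual_indep_iff_exists'.1 hind
  have hXE : X ∩ M.E ⊆ M.E \ C := fun f hf => ⟨hf.2, fun hfC => hdisj f hfC hf.1⟩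
  have he2 : e ∈ M.closure (M.E \ C) := by
    have h1 : M.closure X = M.closure (X ∩ M.E) := (M.closure_inter_ground X).symm
    exact M.closure_subset_closure hXE (h1 ▸ he)
  have hB2 : B ⊆ M.closure (M.E \ C) := by
    intro b hb
    by_cases hbe : b = e
    · exact hbe ▸ he2
    · refine M.subset_closure (M.E \ C) Set.diff_subset
        ⟨hB.subset_ground hb, fun hbC => ?_⟩
      exact Set.disjoint_left.1 hBdisj ⟨hbC, hbe⟩ hb
  have hground : M.E ⊆ M.closure (M.E \ C) := by
    have := M.closure_subset_closure_of_subset_closure hB2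
    rw [hB.closure_eq] at this
    exact this
  have hsp : M.Spanning (M.E \ C) :=
    (Matroid.spanning_iff_ground_subset_closure Set.diff_subset).2 hground
  obtain ⟨B', hB', hB'sub⟩ := hsp.exists_isBase_subset
  refine hdep.not_indep (Matroid.dual_indep_iff_exists'.2 ⟨hCE, B', hB', ?_⟩)
  exact Set.disjoint_left.2 fun f hfC hfB => (hB'sub hfB).2 hfC

lemma supp_union {V : Type*} (E F : Set (Sym2 V)) :
    supp (E ∪ F) = supp E ∪ supp F := by
  ext v
  constructor
  · rintro ⟨e, he | he, hv⟩
    · exact Or.inl ⟨e, he, hv⟩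
    · exact Or.inr ⟨e, he, hv⟩
  · rintro (⟨e, he, hv⟩ | ⟨e, he, hv⟩)
    · exact ⟨e, Or.inl he, hv⟩
    · exact ⟨e, Or.inr he, hv⟩

lemma cK_mono {V : Type*} {U U' : Set V} (h : U ⊆ U') : cK U ⊆ cK U' :=
  fun _ he => ⟨he.1, fun v hv => h (he.2 v hv)⟩

lemma supp_cK_eq {V : Type*} {U : Set V} (hU : U.Nontrivial) : supp (cK U) = U := by
  ext u
  constructor
  · rintro ⟨e, he, hu⟩
    exact he.2 u hu
  · intro hu
    obtain ⟨u', hu', hne⟩ := hU.exists_ne u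
    refine ⟨s(u, u'), ⟨?_, ?_⟩, Sym2.mem_mk_left u u'⟩
    · rw [Sym2.mk_isDiag_iff]; exact fun h => hne h.symm
    · intro v hv
      rcases Sym2.mem_iff.1 hv with rfl | rfl
      · exact hu
      · exact hu'

/-- Closures of subsets of `cK T` stay inside `cK T`, for `T` large enough. -/
lemma closure_subset_cK {V : Type*} [Fintype V] {m : ℕ} {A : Matroid (Sym2 V)}
    (hE : A.E = cK (univ : Set V))
    (hco : ∀ C, IsStarMinus m C → A.IsCocircuit' C)
    {T : Set V} (hT : m + 1 ≤ T.ncard)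
    {X : Set (Sym2 V)} (hX : X ⊆ cK T) : A.closure X ⊆ cK T := by
  intro e he
  have heE : e ∈ cK (univ : Set V) := hE ▸ A.closure_subset_ground X he
  refine ⟨heE.1, fun x hx => ?_⟩
  by_contra hxT
  obtain ⟨y, rfl⟩ := Sym2.mem_iff_exists.1 hx
  -- build an injection of `T \ {y}` into `starv x \ {s(x,y)}`
  have hxy : x ≠ y := fun h => heE.1 (Sym2.mk_isDiag_iff.2 h)
  have himg : (fun v => s(x, v)) '' (T \ {y}) ⊆ starv x \ {s(x, y)} := by
    rintro _ ⟨v, ⟨hvT, hvy⟩, rfl⟩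
    refine ⟨⟨?_, Sym2.mem_mk_left x v⟩, ?_⟩
    · rw [Sym2.mk_isDiag_iff]; exact fun h => hxT (h ▸ hvT)
    · intro hsv
      rcases Sym2.eq_iff.1 hsv with ⟨-, h2⟩ | ⟨h1, h2⟩
      · exact hvy h2
      · obtain rfl := h2; exact hxT hvT
  have hinj : Set.InjOn (fun v => s(x, v)) (T \ {y}) := by
    intro a ha b hb hab
    rcases Sym2.eq_iff.1 hab with ⟨-, h2⟩ | ⟨h1, h2⟩
    · exact h2
    · obtain rfl := h2; exact absurd ha.1 hxT
  have hTy : m ≤ (T \ {y}).ncard := by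
    have h1 : T ⊆ insert y (T \ {y}) := by
      intro t ht
      rcases eq_or_ne t y with rfl | hty
      · exact Set.mem_insert t _
      · exact Set.mem_insert_of_mem _ ⟨ht, hty⟩
    have h2 : T.ncard ≤ (T \ {y}).ncard + 1 :=
      le_trans (Set.ncard_le_ncard h1 (Set.toFinite _)) (Set.ncard_insert_le y _)
    omega
  have hstar : m ≤ (starv x \ {s(x, y)}).ncard := by
    calc m ≤ (T \ {y}).ncard := hTy
    _ = ((fun v => s(x, v)) '' (T \ {y})).ncard := (Set.ncard_image_of_injOn hinj).symm
    _ ≤ (starv x \ {s(x, y)}).ncard := Set.ncard_le_ncard himg (Set.toFinite _)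
  obtain ⟨D, hD, hDcard⟩ := Set.exists_subset_card_eq
    (le_trans (Nat.sub_le m 1) hstar : m - 1 ≤ (starv x \ {s(x, y)}).ncard)
  have hcoc : A.IsCocircuit' (starv x \ D) :=
    hco _ ⟨x, D, fun d hd => (hD hd).1, hDcard, rfl⟩
  have hmem : s(x, y) ∈ starv x \ D :=
    ⟨⟨heE.1, Sym2.mem_mk_left x y⟩, fun hd => (hD hd).2 rfl⟩
  refine factA hcoc hmem (fun f hf hfX => ?_) he
  exact hxT ((hX hfX).2 x hf.1.2)

theorem stmt_8 {V : Type*} [Fintype V] [DecidableEq V] (m k : ℕ)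
    (A : Matroid (Sym2 V)) (hE : A.E = cK (univ : Set V))
    (hco : ∀ C, IsStarMinus m C → A.IsCocircuit' C)
    (hC2 : ∀ E F : Set (Sym2 V), E ⊆ cK (univ : Set V) → F ⊆ cK (univ : Set V) →
      Rigid A E → Rigid A F → m ≤ (supp E ∩ supp F).ncard → Rigid A (E ∪ F))
    (hk : m ≤ k) (E : Set (Sym2 V)) (hEsub : E ⊆ cK (univ : Set V))
    (hErig : Rigid A E)
    (S : Set V) (hS : S ⊆ supp E) (hScard : S.ncard = k)
    (w : V) (hw : w ∉ supp E) :
    Rigid A (E ∪ {e | ∃ v ∈ S, e = s(v, w)}) := by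
  set F : Set (Sym2 V) := {e | ∃ v ∈ S, e = s(v, w)} with hFdef
  rcases Nat.eq_zero_or_pos k with hk0 | hk1
  · -- k = 0 : S is empty and nothing is added
    have hSe : S = ∅ := by
      rw [← Set.ncard_eq_zero (Set.toFinite S)]; omega
    have hFe : F = ∅ := by
      ext e; simp [hFdef, hSe]
    rw [hFe, Set.union_empty]
    exact hErig
  -- k ≥ 1
  have hSne : S.Nonempty := by
    rw [← Set.ncard_pos (Set.toFinite S)]; omega
  have hwS : w ∉ S := fun h => hw (hS h)
  set U : Set V := insert w S with hUdef
  have hUcard : U.ncard = k + 1 := by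
    rw [hUdef, Set.ncard_insert_of_notMem hwS (Set.toFinite S), hScard]
  have hUnt : U.Nontrivial := by
    obtain ⟨v, hv⟩ := hSne
    exact ⟨w, Set.mem_insert w S, v, Set.mem_insert_of_mem _ hv,
      fun h => hwS (h ▸ hv)⟩
  set G : Set (Sym2 V) := cK U with hGdef
  have hGsub : G ⊆ cK (univ : Set V) := cK_mono (Set.subset_univ U)
  have hsuppG : supp G = U := supp_cK_eq hUnt
  have hvw : ∀ v ∈ S, v ≠ w := fun v hv h => hw (hS (h ▸ hv))
  have hFG : F ⊆ G := by
    rintro e ⟨v, hv, rfl⟩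
    refine ⟨?_, ?_⟩
    · rw [Sym2.mk_isDiag_iff]; exact hvw v hv
    · intro u hu
      rcases Sym2.mem_iff.1 hu with rfl | h
      · exact Set.mem_insert_of_mem _ hv
      · rw [h]; exact Set.mem_insert w S
  -- G is rigid
  have hGrig : Rigid A G := by
    rw [Rigid, hsuppG]
    refine subset_antisymm (closure_subset_cK hE hco ?_ subset_rfl) ?_
    · omega
    · rw [← hGdef]
      exact A.subset_closure G (hE ▸ hGsub)
  -- apply (C2) to E and G
  have hScap : S ⊆ supp E ∩ supp G := fun v hv =>
    ⟨hS hv, hsuppG ▸ Set.mem_insert_of_mem _ hv⟩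
  have hEGrig : Rigid A (E ∪ G) := by
    refine hC2 E G hEsub hGsub hErig hGrig ?_
    calc m ≤ k := hk
    _ = S.ncard := hScard.symm
    _ ≤ (supp E ∩ supp G).ncard := Set.ncard_le_ncard hScap (Set.toFinite _)
  have hsuppEG : supp (E ∪ G) = supp E ∪ U := by
    rw [supp_union, hsuppG]
  -- supp F = U
  have hsuppF : supp F = U := by
    ext u
    constructor
    · rintro ⟨e, ⟨v, hv, rfl⟩, hu⟩
      rcases Sym2.mem_iff.1 hu with rfl | h
      · exact Set.mem_insert_of_mem _ hv
      · rw [h]; exact Set.mem_insert w S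
    · intro hu
      rcases hu with rfl | hu
      · obtain ⟨v, hv⟩ := hSne
        exact ⟨s(v, u), ⟨v, hv, rfl⟩, Sym2.mem_mk_right v u⟩
      · exact ⟨s(u, w), ⟨u, hu, rfl⟩, Sym2.mem_mk_left u w⟩
  have hsuppEF : supp (E ∪ F) = supp E ∪ U := by
    rw [supp_union, hsuppF]
  -- closure of E ∪ F equals closure of E ∪ G
  have hsub1 : A.closure (E ∪ F) ⊆ A.closure (E ∪ G) :=
    A.closure_subset_closure (Set.union_subset_union_right E hFG)
  have hEFground : E ∪ F ⊆ A.E := by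
    rw [hE]
    exact Set.union_subset hEsub (subset_trans hFG hGsub)
  have hsub2 : A.closure (E ∪ G) ⊆ A.closure (E ∪ F) := by
    refine A.closure_subset_closure_of_subset_closure (Set.union_subset ?_ ?_)
    · exact subset_trans Set.subset_union_left (A.subset_closure _ hEFground)
    · intro e he
      have := he
      obtain ⟨a, b, rfl⟩ : ∃ a b, e = s(a, b) :=
        Sym2.ind (fun a b => ⟨a, b, rfl⟩) e
      have hab : a ≠ b := fun h => he.1 (Sym2.mk_isDiag_iff.2 h)
      have haU : a ∈ U := he.2 a (Sym2.mem_mk_left a b)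
      have hbU : b ∈ U := he.2 b (Sym2.mem_mk_right a b)
      rcases haU with rfl | haS
      · -- a = w, so b ∈ S
        have hbS : b ∈ S := hbU.resolve_left fun h => hab h.symm
        have : s(a, b) = s(b, a) := Sym2.eq_swap
        rw [this]
        exact A.subset_closure _ hEFground (Or.inr ⟨b, hbS, rfl⟩)
      · rcases hbU with rfl | hbS
        · exact A.subset_closure _ hEFground (Or.inr ⟨a, haS, rfl⟩)
        · -- both in S ⊆ supp E, so the edge is in cl E
          have : s(a, b) ∈ cK (supp E) := by
            refine ⟨he.1, fun v hv => ?_⟩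
            rcases Sym2.mem_iff.1 hv with rfl | rfl
            · exact hS haS
            · exact hS hbS
          rw [← hErig] at this
          exact A.closure_subset_closure Set.subset_union_left this
  rw [Rigid, hsuppEF, subset_antisymm hsub1 hsub2, hEGrig, hsuppEG]
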